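/- arXiv:math/0605041 — 2 statements merged into one kernel-verified Lean document; each statement's English description precedes it below -/
import Mathlib

section
/- Equation (15): Let g be a framed Lie algebra over k. For all z ∈ g and Q ∈ J(g), η(z ⊗ Q + ∇_z Q) = ∇_z ∘ η(Q) − η(Q) ∘ ∇_z as k-linear endomorphisms of T(g). -/
set_option linter.unusedSectionVars false

noncomputable section
open TensorAlgebra TensorProduct

variable (k : Type) [Field k] [CharZero k] (g : Type) [LieRing g] [LieAlgebra k g]

/-- `Λ(g)`: the span of the commutators `x ⊗ y - y ⊗ x` of generators. -/
def Lam : Submodule k (TensorAlgebra k g) :=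
  Submodule.span k {w | ∃ x y : g, w = ι k x * ι k y - ι k y * ι k x}

/-- `J(g) = T(g)·Λ(g)`, the left ideal generated by `Λ(g)`, as a `k`-submodule. -/
def Jg : Submodule k (TensorAlgebra k g) :=
  Submodule.span k {w | ∃ (a : TensorAlgebra k g) (x y : g),
    w = a * (ι k x * ι k y - ι k y * ι k x)}

lemma mul_mem_Jg {ω : TensorAlgebra k g} (hω : ω ∈ Lam k g) (b : TensorAlgebra k g) :
    b * ω ∈ Jg k g := by
  induction hω using Submodule.span_induction with
  | mem w hw =>
      obtain ⟨x, y, rfl⟩ := hw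
      exact Submodule.subset_span ⟨b, x, y, rfl⟩
  | zero => simp
  | add u v hu hv hbu hbv => simpa [mul_add] using (Jg k g).add_mem hbu hbv
  | smul a u hu hbu => simpa [mul_smul_comm] using (Jg k g).smul_mem a hbu

/-- Right multiplication by `ω ∈ Λ(g)`, corestricted to `J(g)`. -/
def mulJ {ω : TensorAlgebra k g} (hω : ω ∈ Lam k g) :
    TensorAlgebra k g →ₗ[k] Jg k g :=
  LinearMap.codRestrict _ (LinearMap.mulRight k ω) (mul_mem_Jg k g hω)

/-- Two derivations of the tensor algebra agreeing on generators are equal. -/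
lemma deriv_ext (D E : Module.End k (TensorAlgebra k g))
    (hD : ∀ a b, D (a * b) = D a * b + a * D b)
    (hE : ∀ a b, E (a * b) = E a * b + a * E b)
    (h : ∀ x : g, D (ι k x) = E (ι k x)) : D = E := by
  have hD1 : D 1 = 0 := by
    have := hD 1 1; simpa using this
  have hE1 : E 1 = 0 := by
    have := hE 1 1; simpa using this
  ext a
  induction a using TensorAlgebra.induction with
  | algebraMap r =>
      have : (algebraMap k (TensorAlgebra k g)) r = r • 1 := by
        simp [Algebra.smul_def]
      rw [this, map_smul, map_smul, hD1, hE1]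
  | ι x => exact h x
  | mul a b ha hb => rw [hD, hE, ha, hb]
  | add a b ha hb => rw [map_add, map_add, ha, hb]

/-- **Equation (15).** For all `z ∈ g` and `Q ∈ J(g)`,
`η(z ⊗ Q + ∇_z Q) = ∇_z ∘ η(Q) - η(Q) ∘ ∇_z`, where `η(Q) = L_{t(Q)} + r(Q)`. -/
theorem equation_fifteen
    (d : g →ₗ[k] g →ₗ[k] g)
    (N : g → Module.End k (TensorAlgebra k g))
    (hNd : ∀ (x : g) (a b : TensorAlgebra k g), N x (a * b) = N x a * b + a * N x b)
    (hN : ∀ x y : g, N x (ι k y) = ι k (d x y))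
    (t : Jg k g →ₗ[k] g)
    (ht1 : ∀ (x y : g) (h : ι k x * ι k y - ι k y * ι k x ∈ Jg k g),
      t ⟨_, h⟩ = d x y - d y x - ⁅x, y⁆)
    (ht2 : ∀ (x : g) (u : Jg k g) (h : ι k x * (u : TensorAlgebra k g) + N x u ∈ Jg k g),
      t ⟨_, h⟩ = d x (t u))
    (r : Jg k g →ₗ[k] Module.End k g)
    (hr1 : ∀ (x y : g) (h : ι k x * ι k y - ι k y * ι k x ∈ Jg k g) (z : g),
      r ⟨_, h⟩ z = d x (d y z) - d y (d x z) - d ⁅x, y⁆ z)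
    (hr2 : ∀ (x : g) (u : Jg k g) (h : ι k x * (u : TensorAlgebra k g) + N x u ∈ Jg k g),
      r ⟨_, h⟩ = d x ∘ₗ r u - r u ∘ₗ d x)
    (rD : Jg k g →ₗ[k] Module.End k (TensorAlgebra k g))
    (hrD1 : ∀ (u : Jg k g) (z : g), rD u (ι k z) = ι k (r u z))
    (hrD2 : ∀ (u : Jg k g) (a b : TensorAlgebra k g),
      rD u (a * b) = rD u a * b + a * rD u b)
    (z : g) (Q : Jg k g) (h : ι k z * (Q : TensorAlgebra k g) + N z Q ∈ Jg k g) :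
    LinearMap.mulLeft k (ι k (t ⟨ι k z * (Q : TensorAlgebra k g) + N z Q, h⟩))
        + rD ⟨ι k z * (Q : TensorAlgebra k g) + N z Q, h⟩
      = N z ∘ₗ (LinearMap.mulLeft k (ι k (t Q)) + rD Q)
        - (LinearMap.mulLeft k (ι k (t Q)) + rD Q) ∘ₗ N z := by
  set P : Jg k g := ⟨ι k z * (Q : TensorAlgebra k g) + N z Q, h⟩ with hP
  have htP : t P = d z (t Q) := ht2 z Q h
  have key : rD P = N z ∘ₗ rD Q - rD Q ∘ₗ N z := by
    apply deriv_ext k g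
    · exact hrD2 P
    · intro a b
      simp only [LinearMap.sub_apply, LinearMap.comp_apply, hNd, hrD2, map_add, sub_mul, mul_sub]
      abel
    · intro x
      have hrP : r P = d z ∘ₗ r Q - r Q ∘ₗ d z := hr2 z Q h
      simp only [LinearMap.sub_apply, LinearMap.comp_apply, hrD1, hrP, hN, map_sub]
  ext a
  simp only [LinearMap.add_apply, LinearMap.sub_apply, LinearMap.comp_apply,
    LinearMap.mulLeft_apply, key, htP, hNd, hN, map_add]
  abel
end
end

section
/- Existence and uniqueness of K: Let g be a framed Lie algebra over k. There exists exactly one k-linear map K : T(g) → T(g) such that K(1) = 1 and K(x ⊗ u + ∇_x u) = x ⊗ K(u) for all x ∈ g and u ∈ T(g); equivalently, K ∘ L_x = L_x ∘ K − K ∘ ∇_x for all x ∈ g. -/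
set_option linter.unusedSectionVars false
set_option maxHeartbeats 1000000

noncomputable section
open TensorAlgebra TensorProduct

section KAux

variable {k : Type} [Field k] {g : Type} [AddCommGroup g] [Module k g]
variable (d : g →ₗ[k] g →ₗ[k] g) (N : g → Module.End k (TensorAlgebra k g))

theorem N_one' (hNd : ∀ (x : g) (a b : TensorAlgebra k g), N x (a * b) = N x a * b + a * N x b)
    (x : g) : N x 1 = 0 := by
  have := hNd x 1 1; simp at this
  linear_combination (norm := module) this

theorem N_algebraMap' (hNd : ∀ (x : g) (a b : TensorAlgebra k g), N x (a * b) = N x a * b + a * N x b)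
    (x : g) (r : k) : N x (algebraMap k (TensorAlgebra k g) r) = 0 := by
  rw [Algebra.algebraMap_eq_smul_one, map_smul, N_one' N hNd, smul_zero]

theorem N_add_left'
    (hNd : ∀ (x : g) (a b : TensorAlgebra k g), N x (a * b) = N x a * b + a * N x b)
    (hN : ∀ x y : g, N x (ι k y) = ι k (d x y))
    (x y : g) (u : TensorAlgebra k g) :
    N (x + y) u = N x u + N y u := by
  induction u using TensorAlgebra.induction with
  | algebraMap r => simp [N_algebraMap' N hNd]
  | ι z => rw [hN, hN, hN, map_add, LinearMap.add_apply, map_add]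
  | mul a b ha hb => rw [hNd, hNd, hNd, ha, hb]; noncomm_ring
  | add a b ha hb => rw [map_add, map_add, map_add, ha, hb]; abel

theorem N_smul_left'
    (hNd : ∀ (x : g) (a b : TensorAlgebra k g), N x (a * b) = N x a * b + a * N x b)
    (hN : ∀ x y : g, N x (ι k y) = ι k (d x y))
    (c : k) (x : g) (u : TensorAlgebra k g) :
    N (c • x) u = c • N x u := by
  induction u using TensorAlgebra.induction with
  | algebraMap r => simp [N_algebraMap' N hNd]
  | ι z => rw [hN, hN, map_smul, LinearMap.smul_apply, map_smul]
  | mul a b ha hb => rw [hNd, hNd, ha, hb, smul_mul_assoc, mul_smul_comm, smul_add]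
  | add a b ha hb => rw [map_add, map_add, ha, hb, smul_add]

theorem N_zero_left'
    (hNd : ∀ (x : g) (a b : TensorAlgebra k g), N x (a * b) = N x a * b + a * N x b)
    (hN : ∀ x y : g, N x (ι k y) = ι k (d x y))
    (u : TensorAlgebra k g) : N 0 u = 0 := by
  have := N_add_left' d N hNd hN 0 0 u; simp at this
  linear_combination (norm := module) this

variable {ι' : Type} (bg : Module.Basis ι' k g)

/-- the word `ι(b i₁) ⋯ ι(b iₙ)` in the tensor algebra -/
def wrd (l : List ι') : TensorAlgebra k g := (l.map fun i => ι k (bg i)).prod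

@[simp] theorem wrd_nil : wrd bg ([] : List ι') = 1 := rfl
@[simp] theorem wrd_cons (i : ι') (l : List ι') :
    wrd bg (i :: l) = ι k (bg i) * wrd bg l := by simp [wrd]

theorem tensorAlgebra_basis_single (m : FreeMonoid ι') :
    bg.tensorAlgebra m = (equivFreeAlgebra bg).symm
      ((FreeAlgebra.equivMonoidAlgebraFreeMonoid).symm (MonoidAlgebra.single m (1:k))) := by
  simp [Module.Basis.tensorAlgebra, FreeAlgebra.basisFreeMonoid]

theorem tensorAlgebra_basis_ofList (l : List ι') :
    bg.tensorAlgebra (FreeMonoid.ofList l) = wrd bg l := by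
  induction l with
  | nil =>
    rw [tensorAlgebra_basis_single]
    have h1 : MonoidAlgebra.single (FreeMonoid.ofList ([] : List ι')) (1:k)
        = (1 : MonoidAlgebra k (FreeMonoid ι')) := rfl
    rw [h1, map_one, map_one]; rfl
  | cons i l ih =>
    rw [tensorAlgebra_basis_single]
    have h1 : MonoidAlgebra.single (FreeMonoid.ofList (i :: l)) (1:k)
        = MonoidAlgebra.single (FreeMonoid.of i) (1:k)
          * MonoidAlgebra.single (FreeMonoid.ofList l) (1:k) := by
      rw [MonoidAlgebra.single_mul_single, one_mul]; rfl
    rw [h1, map_mul, map_mul]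
    have h2 : (FreeAlgebra.equivMonoidAlgebraFreeMonoid).symm
          (MonoidAlgebra.single (FreeMonoid.of i) (1:k)) = FreeAlgebra.ι k i := by
      rw [AlgEquiv.symm_apply_eq]
      simp [FreeAlgebra.equivMonoidAlgebraFreeMonoid, MonoidAlgebra.of_apply]
    rw [h2, equivFreeAlgebra_symm_ι, ← tensorAlgebra_basis_single, ih, wrd_cons]

/-- The basis of words for the tensor algebra, indexed by `List ι'`. -/
def Bw : Module.Basis (List ι') k (TensorAlgebra k g) :=
  (bg.tensorAlgebra).reindex FreeMonoid.toList

@[simp] theorem Bw_apply (l : List ι') : Bw bg l = wrd bg l := by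
  rw [Bw, Module.Basis.reindex_apply, ← tensorAlgebra_basis_ofList]
  rfl

/-- The span of words of length `n`. -/
def Wn (n : ℕ) : Submodule k (TensorAlgebra k g) :=
  Submodule.span k (wrd bg '' {l : List ι' | l.length = n})

theorem wrd_mem_Wn (l : List ι') : wrd bg l ∈ Wn bg l.length :=
  Submodule.subset_span ⟨l, rfl, rfl⟩

theorem ι_mul_mem_Wn (x : g) (n : ℕ) (v : TensorAlgebra k g) (hv : v ∈ Wn bg n) :
    ι k x * v ∈ Wn bg (n + 1) := by
  induction hv using Submodule.span_induction with
  | mem w hw =>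
    obtain ⟨l, hl, rfl⟩ := hw
    have hx : x ∈ Submodule.span k (Set.range bg) := by rw [bg.span_eq]; trivial
    induction hx using Submodule.span_induction with
    | mem y hy =>
      obtain ⟨i, rfl⟩ := hy
      rw [← wrd_cons]
      have hl2 : l.length = n := hl
      exact Submodule.subset_span ⟨i :: l, by simp [Set.mem_setOf_eq, hl2], rfl⟩
    | zero => rw [map_zero, zero_mul]; exact Submodule.zero_mem _
    | add y z _ _ hy hz => rw [map_add, add_mul]; exact Submodule.add_mem _ hy hz
    | smul c y _ hy => rw [map_smul, smul_mul_assoc]; exact Submodule.smul_mem _ _ hy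
  | zero => rw [mul_zero]; exact Submodule.zero_mem _
  | add a b _ _ ha hb => rw [mul_add]; exact Submodule.add_mem _ ha hb
  | smul c a _ ha => rw [mul_smul_comm]; exact Submodule.smul_mem _ _ ha

theorem N_wrd_mem_Wn
    (hNd : ∀ (x : g) (a b : TensorAlgebra k g), N x (a * b) = N x a * b + a * N x b)
    (hN : ∀ x y : g, N x (ι k y) = ι k (d x y))
    (x : g) (l : List ι') : N x (wrd bg l) ∈ Wn bg l.length := by
  induction l with
  | nil => rw [wrd_nil, N_one' N hNd]; exact Submodule.zero_mem _
  | cons i l ih =>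
    rw [wrd_cons, hNd, hN]
    refine Submodule.add_mem _ ?_ (ι_mul_mem_Wn bg (bg i) _ _ ih)
    have : (ι k) ((d x) (bg i)) * wrd bg l ∈ Wn bg (l.length + 1) :=
      ι_mul_mem_Wn bg _ _ _ (wrd_mem_Wn bg l)
    simpa using this

theorem repr_len (n : ℕ) (v : TensorAlgebra k g) (hv : v ∈ Wn bg n) :
    ∀ m ∈ ((Bw bg).repr v).support, (m : List ι').length = n := by
  have himg : wrd bg '' {l : List ι' | l.length = n}
      = Bw bg '' {l : List ι' | l.length = n} := by
    apply Set.image_congr; intro l _; rw [Bw_apply]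
  rw [Wn, himg] at hv
  have := (Module.Basis.mem_span_image (Bw bg)).mp hv
  intro m hm; exact this hm

theorem constr_congr_at {f₁ f₂ : List ι' → TensorAlgebra k g} {v : TensorAlgebra k g}
    (h : ∀ m ∈ ((Bw bg).repr v).support, f₁ m = f₂ m) :
    (Bw bg).constr k f₁ v = (Bw bg).constr k f₂ v := by
  rw [Module.Basis.constr_apply, Module.Basis.constr_apply]
  exact Finsupp.sum_congr fun m hm => by rw [h m hm]

variable (B : Module.Basis (List ι') k (TensorAlgebra k g))

/-- The recursive approximations to `K` on basis words. -/
def Kaux : ℕ → List ι' → TensorAlgebra k g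
  | 0, _ => 1
  | _+1, [] => 1
  | n+1, i :: l => ι k (bg i) * Kaux n l - B.constr k (Kaux n) (N (bg i) (wrd bg l))

theorem Kaux_step
    (hNd : ∀ (x : g) (a b : TensorAlgebra k g), N x (a * b) = N x a * b + a * N x b)
    (hN : ∀ x y : g, N x (ι k y) = ι k (d x y)) :
    ∀ (n : ℕ) (l : List ι'), l.length ≤ n →
      Kaux N bg (Bw bg) (n+1) l = Kaux N bg (Bw bg) n l := by
  intro n
  induction n with
  | zero =>
    intro l hl
    rw [List.length_eq_zero_iff.mp (Nat.le_zero.mp hl)]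
    rfl
  | succ n ih =>
    intro l hl
    match l with
    | [] => rfl
    | i :: l =>
      have hl' : l.length ≤ n := by simpa using hl
      show ι k (bg i) * Kaux N bg (Bw bg) (n+1) l
          - (Bw bg).constr k (Kaux N bg (Bw bg) (n+1)) (N (bg i) (wrd bg l))
          = ι k (bg i) * Kaux N bg (Bw bg) n l
          - (Bw bg).constr k (Kaux N bg (Bw bg) n) (N (bg i) (wrd bg l))
      rw [ih l hl']
      congr 1
      apply constr_congr_at
      intro m hm
      have hmlen := repr_len bg l.length _ (N_wrd_mem_Wn d N bg hNd hN (bg i) l) m hm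
      exact ih m (hmlen ▸ hl')

theorem Kaux_stab
    (hNd : ∀ (x : g) (a b : TensorAlgebra k g), N x (a * b) = N x a * b + a * N x b)
    (hN : ∀ x y : g, N x (ι k y) = ι k (d x y)) :
    ∀ (n : ℕ) (l : List ι'), l.length ≤ n →
      Kaux N bg (Bw bg) n l = Kaux N bg (Bw bg) l.length l := by
  intro n
  induction n with
  | zero => intro l hl; rw [List.length_eq_zero_iff.mp (Nat.le_zero.mp hl)]; rfl
  | succ n ih =>
    intro l hl
    rcases Nat.lt_succ_iff_lt_or_eq.mp (Nat.lt_succ_of_le hl) with h | h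
    · rw [Kaux_step d N bg hNd hN n l (Nat.lt_succ_iff.mp h), ih l (Nat.lt_succ_iff.mp h)]
    · rw [h]

end KAux

variable (k : Type) [Field k] [CharZero k] (g : Type) [LieRing g] [LieAlgebra k g]

/-- **Existence and uniqueness of `K`.** There is exactly one `k`-linear map
`K : T(g) → T(g)` with `K(1) = 1` and `K(x ⊗ u + ∇ₓ u) = x ⊗ K(u)` for all
`x ∈ g`, `u ∈ T(g)`. -/
theorem K_exists_unique
    (d : g →ₗ[k] g →ₗ[k] g)
    (N : g → Module.End k (TensorAlgebra k g))
    (hNd : ∀ (x : g) (a b : TensorAlgebra k g), N x (a * b) = N x a * b + a * N x b)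
    (hN : ∀ x y : g, N x (ι k y) = ι k (d x y))
    : ∃! K : TensorAlgebra k g →ₗ[k] TensorAlgebra k g,
      K 1 = 1 ∧ ∀ (x : g) (u : TensorAlgebra k g), K (ι k x * u + N x u) = ι k x * K u := by
  classical
  set ι'' := Module.Free.ChooseBasisIndex k g with hι''
  set bg : Module.Basis ι'' k g := Module.Free.chooseBasis k g with hbg
  set B : Module.Basis (List ι'') k (TensorAlgebra k g) := Bw bg with hB
  set K : TensorAlgebra k g →ₗ[k] TensorAlgebra k g :=
    B.constr k (fun l => Kaux N bg B l.length l) with hK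
  -- values of K on basis words
  have hKw : ∀ l : List ι'', K (wrd bg l) = Kaux N bg B l.length l := by
    intro l
    rw [← Bw_apply bg l, ← hB, hK, Module.Basis.constr_basis]
  have hK1 : K 1 = 1 := by
    have := hKw []
    rw [wrd_nil] at this
    exact this
  -- K agrees with the n-th approximation on Wn n
  have hKWn : ∀ (n : ℕ) (v : TensorAlgebra k g), v ∈ Wn bg n →
      K v = B.constr k (Kaux N bg B n) v := by
    intro n v hv
    rw [hK]
    apply constr_congr_at
    intro m hm
    have := repr_len bg n v hv m hm
    rw [this]
  -- the key identity on basis elements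
  have hkey : ∀ (i : ι'') (l : List ι''),
      K (ι k (bg i) * wrd bg l + N (bg i) (wrd bg l)) = ι k (bg i) * K (wrd bg l) := by
    intro i l
    rw [map_add, ← wrd_cons, hKw (i :: l), hKw l]
    have h1 : K (N (bg i) (wrd bg l)) = B.constr k (Kaux N bg B l.length) (N (bg i) (wrd bg l)) :=
      hKWn l.length _ (N_wrd_mem_Wn d N bg hNd hN (bg i) l)
    have h2 : Kaux N bg B (i :: l).length (i :: l)
        = ι k (bg i) * Kaux N bg B l.length l
          - B.constr k (Kaux N bg B l.length) (N (bg i) (wrd bg l)) := rfl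
    rw [h1, h2]
    abel
  -- extend to all u by linearity (x = bg i fixed)
  have hbasis_x : ∀ (i : ι'') (u : TensorAlgebra k g),
      K (ι k (bg i) * u + N (bg i) u) = ι k (bg i) * K u := by
    intro i
    have : (K ∘ₗ (LinearMap.mulLeft k (ι k (bg i)) + N (bg i)))
        = (LinearMap.mulLeft k (ι k (bg i))) ∘ₗ K := by
      apply B.ext
      intro l
      rw [hB, Bw_apply]
      simpa using hkey i l
    intro u
    simpa using congrArg (fun f => f u) this
  -- extend to all x by linearity
  have hrec : ∀ (x : g) (u : TensorAlgebra k g),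
      K (ι k x * u + N x u) = ι k x * K u := by
    intro x u
    have hx : x ∈ Submodule.span k (Set.range bg) := by rw [bg.span_eq]; trivial
    induction hx using Submodule.span_induction with
    | mem y hy => obtain ⟨i, rfl⟩ := hy; exact hbasis_x i u
    | zero => simp [N_zero_left' d N hNd hN]
    | add y z _ _ hy hz =>
      have h : (ι k) (y + z) * u + (N (y + z)) u
          = ((ι k) y * u + (N y) u) + ((ι k) z * u + (N z) u) := by
        rw [map_add, N_add_left' d N hNd hN, add_mul]; abel
      rw [h, map_add, hy, hz, map_add, add_mul]
    | smul c y _ hy =>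
      have h : (ι k) (c • y) * u + (N (c • y)) u = c • ((ι k) y * u + (N y) u) := by
        rw [map_smul, N_smul_left' d N hNd hN, smul_add, smul_mul_assoc]
      rw [h, map_smul, hy, map_smul, smul_mul_assoc]
  refine ⟨K, ⟨hK1, hrec⟩, ?_⟩
  -- uniqueness
  rintro K' ⟨hK'1, hK'rec⟩
  have key : ∀ (n : ℕ) (l : List ι''), l.length = n → K' (wrd bg l) = K (wrd bg l) := by
    intro n
    induction n using Nat.strong_induction_on with
    | _ n ih =>
      intro l hl
      match l with
      | [] => rw [wrd_nil, hK'1, hK1]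
      | i :: l =>
        have hl2 : l.length + 1 = n := by simpa using hl
        have hlen : l.length < n := by omega
        have hspan : ∀ v ∈ Wn bg l.length, K' v = K v := by
          intro v hv
          induction hv using Submodule.span_induction with
          | mem w hw =>
            obtain ⟨m, hm, rfl⟩ := hw
            exact ih l.length hlen m hm
          | zero => rw [map_zero, map_zero]
          | add a b _ _ ha hb => rw [map_add, map_add, ha, hb]
          | smul c a _ ha => rw [map_smul, map_smul, ha]
        have e1 : K' (ι k (bg i) * wrd bg l)
            = ι k (bg i) * K' (wrd bg l) - K' (N (bg i) (wrd bg l)) := by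
          have := hK'rec (bg i) (wrd bg l)
          rw [map_add] at this
          linear_combination (norm := module) this
        have e2 : K (ι k (bg i) * wrd bg l)
            = ι k (bg i) * K (wrd bg l) - K (N (bg i) (wrd bg l)) := by
          have := hrec (bg i) (wrd bg l)
          rw [map_add] at this
          linear_combination (norm := module) this
        rw [wrd_cons, e1, e2, ih l.length hlen l rfl,
          hspan _ (N_wrd_mem_Wn d N bg hNd hN (bg i) l)]
  apply B.ext
  intro l
  rw [hB, Bw_apply]
  exact key l.length l rfl
end
end
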